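/- Let G be a finite group, g ↦ U_g a projective unitary representation of G on ℂ^d (i.e., each U_g is unitary and U_g U_h = c(g,h) U_{gh} for complex numbers c(g,h) of modulus 1), ρ₀ a density matrix on ℂ^d, and let W be the symmetric classical-quantum channel W(g) := U_g ρ₀ U_g†. Then for every t > 0, the supremum over probability distributions Q on G of Ĩ_{1+t}^{↓}(X;E|W × Q) is attained at the uniform distribution P_G on G: sup_Q Ĩ_{1+t}^{↓}(X;E|W × Q) = Ĩ_{1+t}^{↓}(X;E|W × P_G). -/

import Mathlib

open scoped Kronecker ComplexOrder
open Matrix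

noncomputable section

/-- Real power of a Hermitian matrix via functional calculus (junk value `0` otherwise). -/
def Matrix.hpow {n : Type*} [Fintype n] [DecidableEq n] (A : Matrix n n ℂ) (r : ℝ) :
    Matrix n n ℂ :=
  if hA : A.IsHermitian then
    (hA.eigenvectorUnitary : Matrix n n ℂ) *
      Matrix.diagonal (fun i => ((hA.eigenvalues i ^ r : ℝ) : ℂ)) *
      (hA.eigenvectorUnitary : Matrix n n ℂ)ᴴ
  else 0

/-- Trace norm ‖A‖₁ = Tr √(AᴴA). -/
def Matrix.traceNorm {n : Type*} [Fintype n] [DecidableEq n] (A : Matrix n n ℂ) : ℝ :=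
  ((Aᴴ * A).hpow (1/2)).trace.re

/-- Density matrix predicate. -/
def IsDensity {n : Type*} [Fintype n] (ρ : Matrix n n ℂ) : Prop :=
  ρ.PosSemidef ∧ ρ.trace = 1

/-- Probability distribution on a finite type. -/
def IsProbDist {X : Type*} [Fintype X] (Q : X → ℝ) : Prop :=
  (∀ x, 0 ≤ Q x) ∧ ∑ x, Q x = 1

/-- Tr[(σ^{−t/(2(1+t))} ρ σ^{−t/(2(1+t))})^{1+t}]. -/
def sandwichTr {n : Type*} [Fintype n] [DecidableEq n] (t : ℝ) (ρ σ : Matrix n n ℂ) : ℝ :=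
  (((σ.hpow (-(t / (2 * (1 + t)))) * ρ * σ.hpow (-(t / (2 * (1 + t))))).hpow (1 + t)).trace).re

/-- Ĩ_{1+t}^{↓}(X;E|W×Q), infimum over positive definite density matrices. -/
def ItildeDown {X n : Type*} [Fintype X] [Fintype n] [DecidableEq n]
    (t : ℝ) (W : X → Matrix n n ℂ) (Q : X → ℝ) : ℝ :=
  ⨅ σ : {σ : Matrix n n ℂ // σ.PosDef ∧ σ.trace = 1},
    (1 / t) * Real.logb 2 (∑ x, Q x * sandwichTr t (W x) σ.1)

/-- The uniform classical state on a finite type. -/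
def uniformState (T : Type*) [Fintype T] [DecidableEq T] : Matrix T T ℂ :=
  (Fintype.card T : ℂ)⁻¹ • 1

section Aux

variable {n : Type*} [Fintype n] [DecidableEq n]

lemma hpow_eq_cfc {A : Matrix n n ℂ} (hA : A.IsHermitian) (r : ℝ) :
    A.hpow r = cfc (fun x : ℝ => x ^ r) A := by
  rw [hA.cfc_eq, Matrix.IsHermitian.cfc, Matrix.hpow, dif_pos hA]
  rfl

/-- Conjugation by a unitary as a star algebra homomorphism. -/
def conjSAH (V : Matrix n n ℂ) (hV : V ∈ Matrix.unitaryGroup n ℂ) :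
    Matrix n n ℂ →⋆ₐ[ℂ] Matrix n n ℂ where
  toFun M := V * M * star V
  map_one' := by
    show V * 1 * star V = 1
    rw [mul_one]
    exact Matrix.mem_unitaryGroup_iff.mp hV
  map_mul' M N := by
    have h1 : star V * V = 1 := Matrix.mem_unitaryGroup_iff'.mp hV
    show V * (M * N) * star V = (V * M * star V) * (V * N * star V)
    rw [show (V*M*star V)*(V*N*star V) = V*M*((star V*V)*(N*star V)) by
      simp only [mul_assoc], h1, one_mul]
    simp only [mul_assoc]
  map_zero' := by show V * 0 * star V = 0; simp
  map_add' M N := by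
    show V * (M + N) * star V = V * M * star V + V * N * star V
    rw [mul_add, add_mul]
  commutes' c := by
    show V * (algebraMap ℂ (Matrix n n ℂ) c) * star V = _
    simp only [Algebra.algebraMap_eq_smul_one]
    rw [mul_smul_comm, mul_one, smul_mul_assoc]
    exact congrArg _ (Matrix.mem_unitaryGroup_iff.mp hV)
  map_star' M := by
    show V * star M * star V = star (V * M * star V)
    simp only [StarMul.star_mul, star_star, mul_assoc]

lemma conjSAH_continuous (V : Matrix n n ℂ) (hV : V ∈ Matrix.unitaryGroup n ℂ) :
    Continuous (conjSAH V hV) := by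
  show Continuous fun M : Matrix n n ℂ => V * M * star V
  exact (continuous_const.matrix_mul continuous_id).matrix_mul continuous_const

omit [DecidableEq n] in
lemma isHermitian_conj_unitary {V A : Matrix n n ℂ}
    (hA : A.IsHermitian) : (V * A * Vᴴ).IsHermitian := by
  unfold Matrix.IsHermitian
  simp only [Matrix.conjTranspose_mul, Matrix.conjTranspose_conjTranspose, hA.eq, mul_assoc]

lemma conj_conj_unitary {V : Matrix n n ℂ} (hV : V ∈ Matrix.unitaryGroup n ℂ)
    (A : Matrix n n ℂ) : Vᴴ * (V * A * Vᴴ) * V = A := by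
  have h1 : Vᴴ * V = 1 := Matrix.mem_unitaryGroup_iff'.mp hV
  calc Vᴴ * (V * A * Vᴴ) * V = (Vᴴ * V) * A * (Vᴴ * V) := by simp only [mul_assoc]
    _ = A := by rw [h1, one_mul, mul_one]

lemma hpow_conj {V : Matrix n n ℂ} (hV : V ∈ Matrix.unitaryGroup n ℂ)
    (A : Matrix n n ℂ) (r : ℝ) :
    (V * A * Vᴴ).hpow r = V * A.hpow r * Vᴴ := by
  by_cases hA : A.IsHermitian
  · have hA' : (V * A * Vᴴ).IsHermitian := isHermitian_conj_unitary hA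
    have hsa : IsSelfAdjoint A := hA
    have hconj : Vᴴ = star V := rfl
    rw [hpow_eq_cfc hA, hpow_eq_cfc hA']
    have hcont : ContinuousOn (fun x : ℝ => x ^ r) (spectrum ℝ A) :=
      (Matrix.finite_real_spectrum (A := A)).continuousOn _
    have := StarAlgHomClass.map_cfc (conjSAH V hV) (fun x : ℝ => x ^ r) A hcont
      (conjSAH_continuous V hV) hsa ?_
    · rw [hconj]; exact this.symm
    · show IsSelfAdjoint (V * A * star V)
      rw [← hconj]; exact hA'
  · have hA' : ¬ (V * A * Vᴴ).IsHermitian := fun h => by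
      have := isHermitian_conj_unitary (V := Vᴴ) h
      rw [Matrix.conjTranspose_conjTranspose, conj_conj_unitary hV] at this
      exact hA this
    rw [show (V * A * Vᴴ).hpow r = 0 from dif_neg hA', show A.hpow r = 0 from dif_neg hA]
    simp

lemma trace_conj_unitary {V : Matrix n n ℂ} (hV : V ∈ Matrix.unitaryGroup n ℂ)
    (A : Matrix n n ℂ) : (V * A * Vᴴ).trace = A.trace := by
  rw [Matrix.trace_mul_cycle,
    show Vᴴ * V = 1 from Matrix.mem_unitaryGroup_iff'.mp hV, one_mul]

lemma posDef_conj_unitary {V A : Matrix n n ℂ} (hV : V ∈ Matrix.unitaryGroup n ℂ)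
    (hA : A.PosDef) : (V * A * Vᴴ).PosDef := by
  refine hA.mul_mul_conjTranspose_same (fun x y hxy => ?_)
  have := congrArg (fun z => z ᵥ* Vᴴ) hxy
  simpa [Matrix.vecMul_vecMul, show V * Vᴴ = 1 from Matrix.mem_unitaryGroup_iff.mp hV]
    using this

lemma trace_eq_sum_eigenvalues {A : Matrix n n ℂ} (hA : A.IsHermitian) :
    A.trace = ∑ i, (hA.eigenvalues i : ℂ) := by
  conv_lhs => rw [hA.spectral_theorem, Unitary.conjStarAlgAut_apply]
  rw [Matrix.trace_mul_cycle,
    show (star hA.eigenvectorUnitary : Matrix n n ℂ) * hA.eigenvectorUnitary = 1 from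
      Unitary.coe_star_mul_self _,
    one_mul, Matrix.trace_diagonal]
  rfl

lemma hpow_isHermitian (A : Matrix n n ℂ) (r : ℝ) : (A.hpow r).IsHermitian := by
  by_cases hA : A.IsHermitian
  · rw [Matrix.hpow, dif_pos hA]
    apply isHermitian_conj_unitary
    apply Matrix.isHermitian_diagonal_of_self_adjoint
    funext i
    simp [Complex.star_def, Complex.conj_ofReal]
  · rw [Matrix.hpow, dif_neg hA]
    exact Matrix.isHermitian_zero

lemma hpow_posSemidef {A : Matrix n n ℂ} (hA : A.PosSemidef) (r : ℝ) :
    (A.hpow r).PosSemidef := by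
  rw [Matrix.hpow, dif_pos hA.1]
  apply Matrix.PosSemidef.mul_mul_conjTranspose_same
  refine Matrix.posSemidef_diagonal_iff.mpr fun i => ?_
  rw [Complex.zero_le_real]
  exact Real.rpow_nonneg (hA.eigenvalues_nonneg i) r

lemma hpow_posDef {A : Matrix n n ℂ} (hA : A.PosDef) (r : ℝ) :
    (A.hpow r).PosDef := by
  rw [Matrix.hpow, dif_pos hA.1]
  apply posDef_conj_unitary (SetLike.coe_mem hA.1.eigenvectorUnitary)
  refine Matrix.posDef_diagonal_iff.mpr fun i => ?_
  rw [Complex.zero_lt_real]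
  exact Real.rpow_pos_of_pos (hA.eigenvalues_pos i) r

lemma trace_hpow {A : Matrix n n ℂ} (hA : A.IsHermitian) (r : ℝ) :
    (A.hpow r).trace = ∑ i, ((hA.eigenvalues i ^ r : ℝ) : ℂ) := by
  rw [Matrix.hpow, dif_pos hA, Matrix.trace_mul_cycle,
    show (hA.eigenvectorUnitary : Matrix n n ℂ)ᴴ * hA.eigenvectorUnitary = 1 from
      Unitary.coe_star_mul_self _,
    one_mul, Matrix.trace_diagonal]

lemma hpow_mul_hpow {A : Matrix n n ℂ} (hA : A.PosDef) (x y : ℝ) :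
    A.hpow x * A.hpow y = A.hpow (x + y) := by
  rw [Matrix.hpow, dif_pos hA.1, Matrix.hpow, dif_pos hA.1, Matrix.hpow, dif_pos hA.1]
  set V := (hA.1.eigenvectorUnitary : Matrix n n ℂ) with hV
  set D₁ := Matrix.diagonal (fun i => ((hA.1.eigenvalues i ^ x : ℝ) : ℂ)) with hD1
  set D₂ := Matrix.diagonal (fun i => ((hA.1.eigenvalues i ^ y : ℝ) : ℂ)) with hD2
  set D₃ := Matrix.diagonal (fun i => ((hA.1.eigenvalues i ^ (x + y) : ℝ) : ℂ)) with hD3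
  have h1 : Vᴴ * V = 1 := Unitary.coe_star_mul_self _
  have key : D₁ * D₂ = D₃ := by
    rw [hD1, hD2, hD3, Matrix.diagonal_mul_diagonal]
    refine congrArg Matrix.diagonal (funext fun i => ?_)
    rw [← Complex.ofReal_mul, ← Real.rpow_add (hA.eigenvalues_pos i)]
  calc V * D₁ * Vᴴ * (V * D₂ * Vᴴ) = V * (D₁ * ((Vᴴ * V) * (D₂ * Vᴴ))) := by
        simp only [mul_assoc]
    _ = V * D₃ * Vᴴ := by rw [h1, one_mul, ← key]; simp only [mul_assoc]

end Aux

section Aux2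

variable {n : Type*} [Fintype n] [DecidableEq n]

lemma re_trace_nonneg {A : Matrix n n ℂ} (hA : A.PosSemidef) : 0 ≤ A.trace.re := by
  rw [trace_eq_sum_eigenvalues hA.1, Complex.re_sum]
  exact Finset.sum_nonneg fun i _ => by
    simpa using hA.eigenvalues_nonneg i

open scoped MatrixOrder in
lemma re_trace_mul_nonneg {ρ D : Matrix n n ℂ} (hρ : ρ.PosSemidef) (hD : D.PosSemidef) :
    0 ≤ (ρ * D).trace.re := by
  have hs : (CFC.sqrt D).PosSemidef := (CFC.sqrt_nonneg D).posSemidef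
  have h2 : CFC.sqrt D * CFC.sqrt D = D := by
    have := CFC.sq_sqrt D hD.nonneg
    rwa [pow_two] at this
  have hps : (CFC.sqrt D * ρ * CFC.sqrt D).PosSemidef := by
    have := hρ.mul_mul_conjTranspose_same (CFC.sqrt D)
    rwa [hs.1.eq] at this
  have e : ρ * D = ρ * CFC.sqrt D * CFC.sqrt D := by rw [mul_assoc, h2]
  rw [e, Matrix.trace_mul_cycle]
  exact re_trace_nonneg hps

lemma sandwich_conj {V : Matrix n n ℂ} (hV : V ∈ Matrix.unitaryGroup n ℂ)
    (t : ℝ) (ρ τ : Matrix n n ℂ) :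
    sandwichTr t (V * ρ * Vᴴ) τ = sandwichTr t ρ (Vᴴ * τ * V) := by
  have hVs : star V ∈ Matrix.unitaryGroup n ℂ := Unitary.star_mem hV
  have hstar : (star V : Matrix n n ℂ) = Vᴴ := rfl
  have hstar2 : ((star V : Matrix n n ℂ))ᴴ = V := by
    rw [hstar, Matrix.conjTranspose_conjTranspose]
  set a := -(t / (2 * (1 + t))) with ha
  have h1 : (Vᴴ * τ * V).hpow a = Vᴴ * τ.hpow a * V := by
    have := hpow_conj hVs τ a
    rwa [hstar2, hstar] at this
  unfold sandwichTr
  rw [h1]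
  set B := τ.hpow a with hB
  have h2 : Vᴴ * B * V * ρ * (Vᴴ * B * V) = Vᴴ * (B * (V * ρ * Vᴴ) * B) * V := by
    simp only [mul_assoc]
  rw [h2]
  have h3 : (Vᴴ * (B * (V * ρ * Vᴴ) * B) * V).hpow (1 + t)
      = Vᴴ * ((B * (V * ρ * Vᴴ) * B).hpow (1 + t)) * V := by
    have := hpow_conj hVs (B * (V * ρ * Vᴴ) * B) (1 + t)
    rwa [hstar2, hstar] at this
  rw [h3]
  have h4 := trace_conj_unitary hVs ((B * (V * ρ * Vᴴ) * B).hpow (1 + t))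
  rw [hstar2, hstar] at h4
  rw [h4]

lemma eigenvalues_le_one {σ : Matrix n n ℂ} (hσ : σ.PosSemidef) (hσt : σ.trace = 1) (i : n) :
    hσ.1.eigenvalues i ≤ 1 := by
  have h := trace_eq_sum_eigenvalues hσ.1
  rw [hσt] at h
  have h2 : (1 : ℝ) = ∑ j, hσ.1.eigenvalues j := by
    have := congrArg Complex.re h
    simpa [Complex.re_sum] using this
  rw [h2]
  exact Finset.single_le_sum (fun j _ => hσ.eigenvalues_nonneg j) (Finset.mem_univ i)

lemma sandwichTr_lb {t : ℝ} (ht : 0 < t) {ρ σ : Matrix n n ℂ}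
    (hρ : ρ.PosSemidef) (hρt : ρ.trace = 1) (hσ : σ.PosDef) (hσt : σ.trace = 1) :
    (Fintype.card n : ℝ) ^ (-t) ≤ sandwichTr t ρ σ := by
  have h1t : (0:ℝ) < 1 + t := by linarith
  rcases isEmpty_or_nonempty n with hn | hn
  · exfalso
    have : ρ.trace = 0 := by simp [Matrix.trace]
    rw [hρt] at this
    exact one_ne_zero this
  have hd : 0 < (Fintype.card n : ℝ) := by
    exact_mod_cast Fintype.card_pos
  set a := -(t / (2 * (1 + t))) with ha
  have haneg : a + a ≤ 0 := by
    have : 0 ≤ t / (2 * (1 + t)) := by positivity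
    simp only [ha]; linarith
  set B := σ.hpow a with hB
  have hBpd : B.PosDef := hpow_posDef hσ a
  set M := B * ρ * B with hM
  have hMpsd : M.PosSemidef := by
    rw [hM, show B * ρ * B = B * ρ * Bᴴ by rw [hBpd.1.eq]]
    exact hρ.mul_mul_conjTranspose_same B
  -- C := B * B = σ.hpow (a+a), and C - 1 is PSD
  have hC : B * B = σ.hpow (a + a) := hpow_mul_hpow hσ a a
  have hCm1 : (σ.hpow (a + a) - 1).PosSemidef := by
    rw [Matrix.hpow, dif_pos hσ.1]
    set V := (hσ.1.eigenvectorUnitary : Matrix n n ℂ) with hV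
    have hVmem : V ∈ Matrix.unitaryGroup n ℂ := SetLike.coe_mem _
    have hone : V * 1 * Vᴴ = 1 := by
      rw [mul_one]; exact Matrix.mem_unitaryGroup_iff.mp hVmem
    have e : V * Matrix.diagonal (fun i => ((hσ.1.eigenvalues i ^ (a+a) : ℝ) : ℂ)) * Vᴴ - 1
        = V * (Matrix.diagonal (fun i => ((hσ.1.eigenvalues i ^ (a+a) : ℝ) : ℂ)) - 1) * Vᴴ := by
      rw [Matrix.mul_sub, Matrix.sub_mul, mul_one]
      rw [show V * Vᴴ = 1 from Matrix.mem_unitaryGroup_iff.mp hVmem]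
    rw [e]
    have hdiag : (Matrix.diagonal (fun i => ((hσ.1.eigenvalues i ^ (a+a) : ℝ) : ℂ)) - 1).PosSemidef := by
      rw [show (1 : Matrix n n ℂ) = Matrix.diagonal (fun _ => (1:ℂ)) from (Matrix.diagonal_one).symm,
        Matrix.diagonal_sub]
      refine Matrix.posSemidef_diagonal_iff.mpr fun i => ?_
      rw [show ((hσ.1.eigenvalues i ^ (a+a) : ℝ) : ℂ) - 1 = (((hσ.1.eigenvalues i ^ (a+a) : ℝ) - 1 : ℝ) : ℂ) by push_cast; ring]
      rw [Complex.zero_le_real, sub_nonneg]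
      exact Real.one_le_rpow_of_pos_of_le_one_of_nonpos (hσ.eigenvalues_pos i)
        (eigenvalues_le_one hσ.posSemidef hσt i) haneg
    have := hdiag.mul_mul_conjTranspose_same V
    exact this
  -- trace M ≥ 1
  have htr : 1 ≤ M.trace.re := by
    have e1 : M.trace = (ρ * (B * B)).trace := by
      rw [hM, Matrix.trace_mul_cycle]
      exact Matrix.trace_mul_comm _ _
    have e2 : ρ * (B * B) = ρ + ρ * (σ.hpow (a+a) - 1) := by
      rw [hC, Matrix.mul_sub, mul_one, add_sub_cancel]
    have e3 : M.trace.re = ρ.trace.re + (ρ * (σ.hpow (a+a) - 1)).trace.re := by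
      rw [e1, e2, Matrix.trace_add, Complex.add_re]
    rw [e3, hρt]
    have := re_trace_mul_nonneg hρ hCm1
    simpa using this
  -- eigenvalue bookkeeping
  set μ := hMpsd.1.eigenvalues with hμdef
  have hμ0 : ∀ i, 0 ≤ μ i := hMpsd.eigenvalues_nonneg
  have hsum : M.trace.re = ∑ i, μ i := by
    rw [trace_eq_sum_eigenvalues hMpsd.1, Complex.re_sum]
    simp
    rfl
  have hfin : sandwichTr t ρ σ = ∑ i, μ i ^ (1 + t) := by
    unfold sandwichTr
    rw [← ha, ← hB, ← hM, trace_hpow hMpsd.1, Complex.re_sum]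
    simp
    rfl
  rw [hfin]
  -- power mean inequality
  set N := (Fintype.card n : ℝ) with hN
  have hw : ∑ _i : n, N⁻¹ = 1 := by
    rw [Finset.sum_const, nsmul_eq_mul]
    field_simp [hN]
    rw [Finset.card_univ]
  have hpm := Real.rpow_arith_mean_le_arith_mean_rpow Finset.univ (fun _ => N⁻¹) μ
    (fun i _ => by positivity) hw (fun i _ => hμ0 i) (by linarith : (1:ℝ) ≤ 1 + t)
  have hls : N⁻¹ * 1 ≤ ∑ i, N⁻¹ * μ i := by
    rw [← Finset.mul_sum, ← hsum]
    have := mul_le_mul_of_nonneg_left htr (by positivity : (0:ℝ) ≤ N⁻¹)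
    linarith
  have hmono : (N⁻¹ * 1) ^ (1+t) ≤ (∑ i, N⁻¹ * μ i) ^ (1+t) :=
    Real.rpow_le_rpow (by positivity) hls (by linarith)
  have hrhs : ∑ i, N⁻¹ * μ i ^ (1+t) = N⁻¹ * ∑ i, μ i ^ (1+t) := by
    rw [Finset.mul_sum]
  have hchain : (N⁻¹) ^ (1+t) ≤ N⁻¹ * ∑ i, μ i ^ (1+t) := by
    calc (N⁻¹) ^ (1+t) = (N⁻¹ * 1) ^ (1+t) := by rw [mul_one]
      _ ≤ (∑ i, N⁻¹ * μ i) ^ (1+t) := hmono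
      _ ≤ ∑ i, N⁻¹ * μ i ^ (1+t) := hpm
      _ = N⁻¹ * ∑ i, μ i ^ (1+t) := hrhs
  have hfinal : N ^ (-t) ≤ ∑ i, μ i ^ (1+t) := by
    have := mul_le_mul_of_nonneg_left hchain (le_of_lt hd)
    rw [← mul_assoc, mul_inv_cancel₀ (ne_of_gt hd), one_mul] at this
    calc N ^ (-t) = N * (N⁻¹) ^ (1+t) := by
          rw [Real.inv_rpow (le_of_lt hd), ← Real.rpow_neg (le_of_lt hd)]
          rw [show (-t : ℝ) = 1 + -(1+t) by ring, Real.rpow_add hd, Real.rpow_one]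
      _ ≤ ∑ i, μ i ^ (1+t) := this
  exact hfinal

end Aux2

section Phase

variable {n : Type*} [Fintype n] [DecidableEq n]

omit [DecidableEq n] in
lemma conj_phase (V σ : Matrix n n ℂ) {z : ℂ} (hz : ‖z‖ = 1) :
    (z • V) * σ * (z • V)ᴴ = V * σ * Vᴴ := by
  rw [Matrix.conjTranspose_smul, smul_mul_assoc, smul_mul_assoc, mul_smul_comm, smul_smul]
  have : z * star z = 1 := by
    rw [Complex.star_def, Complex.mul_conj]
    norm_cast
    rw [Complex.normSq_eq_norm_sq, hz, one_pow]
  rw [this, one_smul]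

end Phase


lemma avg_le_uniform {G : Type*} [Group G] [Fintype G] {ι : Type*} [Nonempty ι]
    (F : G → ι → ℝ) (τ : G → ι → ι) (Φ : ι → G → ℝ)
    (hFτ : ∀ g h σ, F g (τ h σ) = Φ σ (g⁻¹ * h))
    (hF1 : ∀ g σ, F g σ = Φ σ g⁻¹)
    (t : ℝ) (ht : 0 < t) (ε : ℝ) (hε : 0 < ε)
    (hlbF : ∀ (Q : G → ℝ), IsProbDist Q → ∀ σ, ε ≤ ∑ g, Q g * F g σ)
    (Q : G → ℝ) (hQ : IsProbDist Q) :
    (⨅ σ : ι, (1/t) * Real.logb 2 (∑ g, Q g * F g σ))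
      ≤ ⨅ σ : ι, (1/t) * Real.logb 2 (∑ g, (Fintype.card G : ℝ)⁻¹ * F g σ) := by
  have hG : (0:ℝ) < (Fintype.card G : ℝ) := by exact_mod_cast Fintype.card_pos
  have hBdd : BddBelow (Set.range fun σ : ι => (1/t) * Real.logb 2 (∑ g, Q g * F g σ)) := by
    refine ⟨(1/t) * Real.logb 2 ε, ?_⟩
    rintro x ⟨σ, rfl⟩
    apply mul_le_mul_of_nonneg_left _ (by positivity : (0:ℝ) ≤ 1/t)
    exact Real.logb_le_logb_of_le one_lt_two hε (hlbF Q hQ σ)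
  refine le_ciInf fun σ => ?_
  have hsum1 : ∑ h : G, ∑ g : G, Q g * F g (τ h σ) = ∑ k : G, Φ σ k := by
    calc ∑ h : G, ∑ g : G, Q g * F g (τ h σ)
        = ∑ g : G, ∑ h : G, Q g * Φ σ (g⁻¹ * h) := by
          rw [Finset.sum_comm]
          exact Finset.sum_congr rfl fun g _ => Finset.sum_congr rfl fun h _ => by rw [hFτ]
      _ = ∑ g : G, Q g * ∑ k : G, Φ σ k := by
          refine Finset.sum_congr rfl fun g _ => ?_
          rw [← Finset.mul_sum]
          congr 1
          exact Fintype.sum_equiv (Equiv.mulLeft g⁻¹) _ _ (fun h => rfl)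
      _ = ∑ k : G, Φ σ k := by rw [← Finset.sum_mul, hQ.2, one_mul]
  have hsum2 : ∑ g : G, (Fintype.card G : ℝ)⁻¹ * F g σ
      = (Fintype.card G : ℝ)⁻¹ * ∑ k : G, Φ σ k := by
    rw [← Finset.mul_sum]
    congr 1
    calc ∑ g : G, F g σ = ∑ g : G, Φ σ g⁻¹ :=
          Finset.sum_congr rfl fun g _ => hF1 g σ
      _ = ∑ k : G, Φ σ k := Fintype.sum_equiv (Equiv.inv G) _ _ (fun g => rfl)
  have hex : ∃ h0 : G, ∑ g : G, Q g * F g (τ h0 σ)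
      ≤ ∑ g : G, (Fintype.card G : ℝ)⁻¹ * F g σ := by
    have := Finset.exists_le_of_sum_le (s := (Finset.univ : Finset G))
      (f := fun h : G => ∑ g : G, Q g * F g (τ h σ))
      (g := fun _ : G => ∑ g : G, (Fintype.card G : ℝ)⁻¹ * F g σ)
      Finset.univ_nonempty ?_
    · obtain ⟨h0, _, hh0⟩ := this
      exact ⟨h0, hh0⟩
    · rw [hsum1, Finset.sum_const, nsmul_eq_mul, hsum2, ← mul_assoc,
        show ((Finset.univ : Finset G).card : ℝ) = (Fintype.card G : ℝ) by
          rw [Finset.card_univ],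
        mul_inv_cancel₀ (ne_of_gt hG), one_mul]
  obtain ⟨h0, hh0⟩ := hex
  calc (⨅ σ' : ι, (1/t) * Real.logb 2 (∑ g, Q g * F g σ'))
      ≤ (1/t) * Real.logb 2 (∑ g, Q g * F g (τ h0 σ)) := ciInf_le hBdd (τ h0 σ)
    _ ≤ (1/t) * Real.logb 2 (∑ g, (Fintype.card G : ℝ)⁻¹ * F g σ) := by
        apply mul_le_mul_of_nonneg_left _ (by positivity : (0:ℝ) ≤ 1/t)
        exact Real.logb_le_logb_of_le one_lt_two (lt_of_lt_of_le hε (hlbF Q hQ (τ h0 σ))) hh0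


/-- For a symmetric cq channel arising from a projective unitary
representation of a finite group, the optimized sandwiched Rényi mutual information is
attained at the uniform distribution. -/
theorem ItildeDown_symmetric_uniform
    {G : Type*} [Group G] [Fintype G] {d : ℕ}
    (U : G → Matrix (Fin d) (Fin d) ℂ)
    (hU : ∀ g, U g ∈ Matrix.unitaryGroup (Fin d) ℂ)
    (c : G → G → ℂ) (hc : ∀ g h, ‖c g h‖ = 1)
    (hrep : ∀ g h, U g * U h = c g h • U (g * h))
    (ρ₀ : Matrix (Fin d) (Fin d) ℂ) (hρ₀ : IsDensity ρ₀)
    (t : ℝ) (ht : 0 < t) :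
    (⨆ Q : {Q : G → ℝ // IsProbDist Q},
        ItildeDown t (fun g => U g * ρ₀ * (U g)ᴴ) Q.1)
      = ItildeDown t (fun g => U g * ρ₀ * (U g)ᴴ)
          (fun _ => (Fintype.card G : ℝ)⁻¹) := by
  classical
  obtain ⟨hρpsd, hρtr⟩ := hρ₀
  set W : G → Matrix (Fin d) (Fin d) ℂ := fun g => U g * ρ₀ * (U g)ᴴ with hWdef
  -- d is positive
  have hd0 : 0 < d := by
    rcases Nat.eq_zero_or_pos d with rfl | h
    · exfalso
      have : ρ₀.trace = 0 := by simp [Matrix.trace]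
      rw [hρtr] at this
      exact one_ne_zero this
    · exact h
  have hdR : (0:ℝ) < (d:ℝ) := by exact_mod_cast hd0
  -- phase bookkeeping for the projective representation
  have hUadj : ∀ g h : G, (U g)ᴴ * U h = (c g (g⁻¹ * h))⁻¹ • U (g⁻¹ * h) := by
    intro g h
    have hc0 : c g (g⁻¹ * h) ≠ 0 := by
      intro e
      have := hc g (g⁻¹ * h)
      rw [e] at this
      simp at this
    have h1 := hrep g (g⁻¹ * h)
    rw [mul_inv_cancel_left] at h1
    have h2 := congrArg (fun M => (U g)ᴴ * M) h1
    simp only [← mul_assoc, mul_smul_comm] at h2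
    rw [show (U g)ᴴ * U g = 1 from Matrix.mem_unitaryGroup_iff'.mp (hU g), one_mul] at h2
    rw [eq_comm, inv_smul_eq_iff₀ hc0]
    exact h2
  have hstep : ∀ (g h : G) (σ : Matrix (Fin d) (Fin d) ℂ),
      (U g)ᴴ * (U h * σ * (U h)ᴴ) * U g = U (g⁻¹*h) * σ * (U (g⁻¹*h))ᴴ := by
    intro g h σ
    have e : (U g)ᴴ * (U h * σ * (U h)ᴴ) * U g = ((U g)ᴴ * U h) * σ * ((U g)ᴴ * U h)ᴴ := by
      rw [Matrix.conjTranspose_mul, Matrix.conjTranspose_conjTranspose]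
      simp only [mul_assoc]
    rw [e, hUadj g h]
    exact conj_phase _ _ (by rw [norm_inv, hc, inv_one])
  have hU1 : ∀ σ : Matrix (Fin d) (Fin d) ℂ, U 1 * σ * (U 1)ᴴ = σ := by
    intro σ
    have h1 := hrep 1 1
    rw [mul_one] at h1
    have h2 := congrArg (fun M => (U 1)ᴴ * M) h1
    simp only [← mul_assoc, mul_smul_comm] at h2
    rw [show (U 1)ᴴ * U 1 = 1 from Matrix.mem_unitaryGroup_iff'.mp (hU 1), one_mul] at h2
    rw [h2, conj_phase _ _ (hc 1 1), one_mul, Matrix.conjTranspose_one, mul_one]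
  have hW : ∀ (g h : G) (σ : Matrix (Fin d) (Fin d) ℂ),
      sandwichTr t (W g) (U h * σ * (U h)ᴴ)
        = sandwichTr t ρ₀ (U (g⁻¹*h) * σ * (U (g⁻¹*h))ᴴ) := by
    intro g h σ
    rw [hWdef]
    rw [sandwich_conj (hU g) t ρ₀ (U h * σ * (U h)ᴴ), hstep]
  have hWs : ∀ (g : G) (σ : Matrix (Fin d) (Fin d) ℂ),
      sandwichTr t (W g) σ = sandwichTr t ρ₀ (U g⁻¹ * σ * (U g⁻¹)ᴴ) := by
    intro g σ
    conv_lhs => rw [← hU1 σ]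
    rw [hW g 1 σ, mul_one]
  -- properties of W
  have hWpsd : ∀ g, (W g).PosSemidef := fun g => hρpsd.mul_mul_conjTranspose_same (U g)
  have hWtr : ∀ g, (W g).trace = 1 := fun g => by
    rw [hWdef]; rw [trace_conj_unitary (hU g) ρ₀]; exact hρtr
  -- uniform lower bound for the objective
  have hSlb : ∀ (Q : G → ℝ), IsProbDist Q → ∀ σ : Matrix (Fin d) (Fin d) ℂ,
      σ.PosDef → σ.trace = 1 → (d:ℝ) ^ (-t) ≤ ∑ g, Q g * sandwichTr t (W g) σ := by
    intro Q hQ σ hσ hσt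
    have h1 : ∀ g : G, Q g * (d:ℝ) ^ (-t) ≤ Q g * sandwichTr t (W g) σ := by
      intro g
      apply mul_le_mul_of_nonneg_left _ (hQ.1 g)
      have := sandwichTr_lb ht (hWpsd g) (hWtr g) hσ hσt
      rwa [Fintype.card_fin] at this
    calc (d:ℝ) ^ (-t) = ∑ g, Q g * (d:ℝ) ^ (-t) := by
          rw [← Finset.sum_mul, hQ.2, one_mul]
      _ ≤ ∑ g, Q g * sandwichTr t (W g) σ := Finset.sum_le_sum fun g _ => h1 g
  have hrpos : (0:ℝ) < (d:ℝ) ^ (-t) := Real.rpow_pos_of_pos hdR _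
  -- the subtype of feasible states is nonempty
  have hne : Nonempty {σ : Matrix (Fin d) (Fin d) ℂ // σ.PosDef ∧ σ.trace = 1} := by
    refine ⟨⟨(d:ℂ)⁻¹ • 1, ?_, ?_⟩⟩
    · rw [show ((d:ℂ)⁻¹ • 1 : Matrix (Fin d) (Fin d) ℂ)
          = Matrix.diagonal (fun _ => (d:ℂ)⁻¹) by
        ext i j
        rw [Matrix.smul_apply, Matrix.one_apply, Matrix.diagonal_apply]
        split <;> simp]
      refine Matrix.posDef_diagonal_iff.mpr fun i => ?_
      rw [show ((d:ℂ))⁻¹ = (((d:ℝ)⁻¹ : ℝ) : ℂ) by push_cast; ring]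
      rw [Complex.zero_lt_real]
      positivity
    · rw [Matrix.trace_smul, Matrix.trace_one]
      rw [Fintype.card_fin]
      have : ((d:ℂ)) ≠ 0 := by exact_mod_cast hd0.ne'
      rw [smul_eq_mul, inv_mul_cancel₀ this]
  have hGpos : (0:ℝ) < (Fintype.card G : ℝ) := by exact_mod_cast Fintype.card_pos
  have hUnif : IsProbDist (fun _ : G => (Fintype.card G : ℝ)⁻¹) := by
    constructor
    · intro x; positivity
    · rw [Finset.sum_const, nsmul_eq_mul, Finset.card_univ]
      field_simp
  -- key comparison via the averaging lemma
  have hcomp : ∀ (Q : G → ℝ), IsProbDist Q →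
      ItildeDown t W Q ≤ ItildeDown t W (fun _ => (Fintype.card G : ℝ)⁻¹) := by
    intro Q hQ
    haveI := hne
    unfold ItildeDown
    exact avg_le_uniform
      (F := fun (g : G) (σ : {σ : Matrix (Fin d) (Fin d) ℂ // σ.PosDef ∧ σ.trace = 1}) =>
        sandwichTr t (W g) σ.1)
      (τ := fun (h : G) σ => ⟨U h * σ.1 * (U h)ᴴ,
        posDef_conj_unitary (hU h) σ.2.1,
        by rw [trace_conj_unitary (hU h)]; exact σ.2.2⟩)
      (Φ := fun σ (k : G) => sandwichTr t ρ₀ (U k * σ.1 * (U k)ᴴ))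
      (fun g h σ => hW g h σ.1) (fun g σ => hWs g σ.1)
      t ht ((d:ℝ) ^ (-t)) hrpos
      (fun Q' hQ' σ => hSlb Q' hQ' σ.1 σ.2.1 σ.2.2) Q hQ
  -- conclusion
  haveI : Nonempty {Q : G → ℝ // IsProbDist Q} :=
    ⟨⟨fun _ => (Fintype.card G : ℝ)⁻¹, hUnif⟩⟩
  apply le_antisymm
  · exact ciSup_le fun Q => hcomp Q.1 Q.2
  · exact le_ciSup (f := fun Q : {Q : G → ℝ // IsProbDist Q} => ItildeDown t W Q.1)
      ⟨ItildeDown t W (fun _ => (Fintype.card G : ℝ)⁻¹), by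
        rintro x ⟨Q, rfl⟩; exact hcomp Q.1 Q.2⟩
      (⟨fun _ => (Fintype.card G : ℝ)⁻¹, hUnif⟩ : {Q : G → ℝ // IsProbDist Q})

end
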